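/- arXiv:1910.12353 — 3 statements merged into one kernel-verified Lean document; each statement's English description precedes it below -/
import Mathlib

section
/- Let G be a finite weighted graph on vertex set V, let C be a vertex cover of G, let I = V∖C, and fix C̃ ⊆ C. Then every set S ⊆ V with S ∩ C = C̃ satisfies w(S, V∖S) = w(C̃, C∖C̃) + w(C̃, I) + Σ_{i ∈ S∩I} ( w({i}, C∖C̃) − w({i}, C̃) ). -/
open Finset

set_option maxHeartbeats 1000000

/-- Total weight of the edges of `G` with one endpoint in `S` and the other in `T`. -/
def cutW {V : Type*} [Fintype V] [DecidableEq V] (G : SimpleGraph V) [DecidableRel G.Adj]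
    (w : Sym2 V → ℝ) (S T : Finset V) : ℝ :=
  ∑ e ∈ G.edgeFinset.filter (fun e => ∃ a ∈ S, ∃ b ∈ T, e = s(a, b)), w e

lemma cond_iff {V : Type*} [DecidableEq V] (u v : V) (S T : Finset V) :
    (∃ a ∈ S, ∃ b ∈ T, s(u, v) = s(a, b)) ↔ (u ∈ S ∧ v ∈ T) ∨ (v ∈ S ∧ u ∈ T) := by
  constructor
  · rintro ⟨a, ha, b, hb, h⟩
    rw [Sym2.eq_iff] at h
    rcases h with ⟨rfl, rfl⟩ | ⟨rfl, rfl⟩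
    · exact Or.inl ⟨ha, hb⟩
    · exact Or.inr ⟨ha, hb⟩
  · rintro (⟨h1, h2⟩ | ⟨h1, h2⟩)
    · exact ⟨u, h1, v, h2, rfl⟩
    · exact ⟨v, h1, u, h2, Sym2.eq_swap⟩

lemma sum_two {V : Type*} [DecidableEq V] (u v : V) (huv : u ≠ v) (T : Finset V)
    (f : V → ℝ) (hf : ∀ i, i ≠ u → i ≠ v → f i = 0) :
    ∑ i ∈ T, f i = (if u ∈ T then f u else 0) + (if v ∈ T then f v else 0) := by
  have : ∀ i, f i = (if i = u then f u else 0) + (if i = v then f v else 0) := by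
    intro i
    by_cases h1 : i = u
    · subst h1; simp [huv]
    · by_cases h2 : i = v
      · subst h2; simp [h1]
      · simp [h1, h2, hf i h1 h2]
  calc ∑ i ∈ T, f i = ∑ i ∈ T, ((if i = u then f u else 0) + (if i = v then f v else 0)) :=
        Finset.sum_congr rfl fun i _ => this i
    _ = _ := by rw [Finset.sum_add_distrib, Finset.sum_ite_eq' T u (fun _ => f u),
          Finset.sum_ite_eq' T v (fun _ => f v)]

/-- If `C` is a vertex cover, `I = V∖C` and `S ∩ C = C̃`, then
`w(S, V∖S) = w(C̃, C∖C̃) + w(C̃, I) + Σ_{i ∈ S∩I} (w({i}, C∖C̃) − w({i}, C̃))`. -/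
theorem stmt_3 {V : Type*} [Fintype V] [DecidableEq V] (G : SimpleGraph V) [DecidableRel G.Adj]
    (w : Sym2 V → ℝ) (hw : ∀ e ∈ G.edgeSet, 0 < w e)
    (C : Finset V) (hC : ∀ u v, G.Adj u v → u ∈ C ∨ v ∈ C)
    (I : Finset V) (hI : I = Cᶜ)
    (Ct : Finset V) (hCt : Ct ⊆ C)
    (S : Finset V) (hS : S ∩ C = Ct) :
    cutW G w S Sᶜ =
      cutW G w Ct (C \ Ct) + cutW G w Ct I +
        ∑ i ∈ S ∩ I, (cutW G w {i} (C \ Ct) - cutW G w {i} Ct) := by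
  classical
  subst hI
  have key : ∑ i ∈ S ∩ Cᶜ, (cutW G w {i} (C \ Ct) - cutW G w {i} Ct)
      = ∑ e ∈ G.edgeFinset, ∑ i ∈ S ∩ Cᶜ,
          ((if (∃ a ∈ ({i} : Finset V), ∃ b ∈ C \ Ct, e = s(a, b)) then w e else 0)
           - (if (∃ a ∈ ({i} : Finset V), ∃ b ∈ Ct, e = s(a, b)) then w e else 0)) := by
    rw [Finset.sum_comm]
    refine Finset.sum_congr rfl fun i _ => ?_
    rw [cutW, cutW, Finset.sum_filter, Finset.sum_filter, ← Finset.sum_sub_distrib]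
  rw [key, cutW, cutW, cutW, Finset.sum_filter, Finset.sum_filter, Finset.sum_filter,
    ← Finset.sum_add_distrib, ← Finset.sum_add_distrib]
  refine Finset.sum_congr rfl fun e he => ?_
  induction e using Sym2.ind with
  | _ u v =>
    rw [SimpleGraph.mem_edgeFinset, SimpleGraph.mem_edgeSet] at he
    have huv : u ≠ v := he.ne
    have hvu : v ≠ u := huv.symm
    have hcov := hC u v he
    simp only [cond_iff]
    simp only [mem_singleton]
    rw [sum_two u v huv (S ∩ Cᶜ)]
    swap
    · intro i hiu hiv
      rw [if_neg, if_neg]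
      · ring
      · rintro (⟨h, -⟩ | ⟨h, -⟩)
        · exact hiu h.symm
        · exact hiv h.symm
      · rintro (⟨h, -⟩ | ⟨h, -⟩)
        · exact hiu h.symm
        · exact hiv h.symm
    rw [← hS]
    simp only [mem_inter, mem_sdiff, mem_compl, eq_self_iff_true, true_and, huv, hvu,
      false_and, false_or, or_false, and_false, and_true, not_and, not_not]
    by_cases huC : u ∈ C <;> by_cases hvC : v ∈ C <;>
      by_cases huS : u ∈ S <;> by_cases hvS : v ∈ S <;>
      simp only [huC, hvC, huS, hvS, not_true, not_false_iff, true_and, false_and, and_true,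
        and_false, true_or, or_true, false_or, or_false, if_true, if_false, not_not,
        eq_self_iff_true, true_implies, false_implies, implies_true,
        ite_true, ite_false] <;>
      first | ring1 | exact absurd hcov (not_or.mpr ⟨huC, hvC⟩)
end

section
/- Let G be a finite weighted graph on vertex set V, let C be a vertex cover of G, let I = V∖C, fix C̃ ⊆ C, and let s be an integer with |C̃| ≤ s ≤ |C̃| + |I|. Then min{ w(S, V∖S) : S ⊆ V, S ∩ C = C̃, |S| = s } = w(C̃, C∖C̃) + w(C̃, I) + min{ Σ_{i ∈ T} ( w({i}, C∖C̃) − w({i}, C̃) ) : T ⊆ I, |T| = s − |C̃| }. -/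
open Finset

section helpers
variable {V : Type*} [Fintype V] [DecidableEq V] (G : SimpleGraph V) [DecidableRel G.Adj]
    (w : Sym2 V → ℝ)

lemma cutW_comm (S T : Finset V) : cutW G w S T = cutW G w T S := by
  unfold cutW
  congr 1
  apply Finset.filter_congr
  intro e _
  constructor <;> rintro ⟨a, ha, b, hb, rfl⟩ <;> exact ⟨b, hb, a, ha, Sym2.eq_swap⟩

lemma cutW_empty (T : Finset V) : cutW G w ∅ T = 0 := by
  simp [cutW]

lemma cutW_union_right (S T1 T2 : Finset V) (h12 : Disjoint T1 T2)
    (h1 : Disjoint S T1) (h2 : Disjoint S T2) :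
    cutW G w S (T1 ∪ T2) = cutW G w S T1 + cutW G w S T2 := by
  unfold cutW
  rw [← Finset.sum_union]
  · congr 1
    ext e
    simp only [Finset.mem_filter, Finset.mem_union]
    constructor
    · rintro ⟨he, a, ha, b, hb, rfl⟩
      rcases hb with hb | hb
      · exact Or.inl ⟨he, a, ha, b, hb, rfl⟩
      · exact Or.inr ⟨he, a, ha, b, hb, rfl⟩
    · rintro (⟨he, a, ha, b, hb, rfl⟩ | ⟨he, a, ha, b, hb, rfl⟩)
      exacts [⟨he, a, ha, b, Or.inl hb, rfl⟩, ⟨he, a, ha, b, Or.inr hb, rfl⟩]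
  · rw [Finset.disjoint_filter]
    rintro e _ ⟨a, ha, b, hb, rfl⟩ ⟨a', ha', b', hb', he'⟩
    rw [Sym2.eq_iff] at he'
    rcases he' with ⟨rfl, rfl⟩ | ⟨rfl, rfl⟩
    · exact Finset.disjoint_left.1 h12 hb hb'
    · exact Finset.disjoint_left.1 h2 ha hb'

lemma cutW_eq_zero (C : Finset V) (hC : ∀ u v, G.Adj u v → u ∈ C ∨ v ∈ C)
    (S T : Finset V) (hS : Disjoint S C) (hT : Disjoint T C) :
    cutW G w S T = 0 := by
  apply Finset.sum_eq_zero
  rintro e he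
  rw [Finset.mem_filter] at he
  obtain ⟨he, a, ha, b, hb, rfl⟩ := he
  rw [SimpleGraph.mem_edgeFinset, SimpleGraph.mem_edgeSet] at he
  rcases hC a b he with h | h
  · exact absurd h (Finset.disjoint_left.1 hS ha)
  · exact absurd h (Finset.disjoint_left.1 hT hb)

lemma cutW_sum_singleton (X : Finset V) : ∀ (T : Finset V), Disjoint T X →
    ∑ i ∈ T, cutW G w {i} X = cutW G w T X := by
  intro T
  induction T using Finset.induction_on with
  | empty => intro _; simp [cutW_empty]
  | @insert i T hi ih =>
    intro h
    rw [Finset.disjoint_insert_left] at h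
    rw [Finset.sum_insert hi, ih h.2]
    have hins : insert i T = {i} ∪ T := by
      ext x; simp [Finset.mem_insert]
    rw [hins, cutW_comm G w ({i} ∪ T) X,
      cutW_union_right G w X {i} T (by simpa using hi)
        (Finset.disjoint_singleton_left.2 h.1).symm h.2.symm,
      cutW_comm G w X {i}, cutW_comm G w X T]

lemma cutW_key (C : Finset V) (hC : ∀ u v, G.Adj u v → u ∈ C ∨ v ∈ C)
    (Ct T : Finset V) (hCt : Ct ⊆ C) (hT : Disjoint T C) :
    cutW G w (Ct ∪ T) (Ct ∪ T)ᶜ =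
      cutW G w Ct (C \ Ct) + cutW G w Ct Cᶜ +
        ∑ i ∈ T, (cutW G w {i} (C \ Ct) - cutW G w {i} Ct) := by
  have hdTCt : Disjoint T Ct := hT.mono_right hCt
  have hdTC' : Disjoint T (C \ Ct) := hT.mono_right (Finset.sdiff_subset)
  have hTsub : T ⊆ Cᶜ := fun x hx => Finset.mem_compl.2 (Finset.disjoint_left.1 hT hx)
  have hcompl : (Ct ∪ T)ᶜ = (C \ Ct) ∪ (Cᶜ \ T) := by
    ext x
    have h1 : x ∈ Ct → x ∈ C := fun h => hCt h
    have h2 : x ∈ T → x ∉ C := fun h => Finset.disjoint_left.1 hT h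
    simp only [Finset.mem_compl, Finset.mem_union, Finset.mem_sdiff]
    by_cases hxC : x ∈ C <;> by_cases hxT : x ∈ T <;> by_cases hxCt : x ∈ Ct <;> tauto
  rw [hcompl]
  have hdisj1 : Disjoint (C \ Ct) (Cᶜ \ T) := by
    apply Finset.disjoint_left.2
    rintro x hx hx'
    rw [Finset.mem_sdiff] at hx hx'
    exact (Finset.mem_compl.1 hx'.1) hx.1
  have hdCtT : Disjoint Ct T := hdTCt.symm
  have hdCtC' : Disjoint Ct (C \ Ct) := Finset.sdiff_disjoint.symm
  have hdCtI : Disjoint Ct Cᶜ := by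
    apply Finset.disjoint_left.2
    intro x hx hx'
    exact (Finset.mem_compl.1 hx') (hCt hx)
  have hdCtI' : Disjoint Ct (Cᶜ \ T) := hdCtI.mono_right Finset.sdiff_subset
  have hdTI' : Disjoint T (Cᶜ \ T) := Finset.disjoint_sdiff
  rw [cutW_comm G w (Ct ∪ T), cutW_union_right G w _ Ct T hdCtT
      (by rw [Finset.disjoint_union_left]; exact ⟨hdCtC'.symm, hdCtI'.symm⟩)
      (by rw [Finset.disjoint_union_left]; exact ⟨hdTC'.symm, hdTI'.symm⟩),
    cutW_comm G w _ Ct, cutW_comm G w _ T,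
    cutW_union_right G w Ct _ _ hdisj1 hdCtC' hdCtI',
    cutW_union_right G w T _ _ hdisj1 hdTC' hdTI']
  have hz : cutW G w T (Cᶜ \ T) = 0 := by
    apply cutW_eq_zero G w C hC _ _ hT
    apply Finset.disjoint_left.2
    intro x hx
    exact fun hxC => Finset.mem_compl.1 (Finset.mem_sdiff.1 hx).1 hxC
  have hsplit : (Cᶜ : Finset V) = (Cᶜ \ T) ∪ T := by
    rw [Finset.sdiff_union_self_eq_union]
    exact (Finset.union_eq_left.2 hTsub).symm
  have hIeq : cutW G w Ct Cᶜ = cutW G w Ct (Cᶜ \ T) + cutW G w Ct T := by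
    conv_lhs => rw [hsplit]
    exact cutW_union_right G w Ct _ _ Finset.sdiff_disjoint hdCtI' hdCtT
  have hsum : ∑ i ∈ T, (cutW G w {i} (C \ Ct) - cutW G w {i} Ct) =
      cutW G w T (C \ Ct) - cutW G w T Ct := by
    rw [Finset.sum_sub_distrib, cutW_sum_singleton G w _ T hdTC',
      cutW_sum_singleton G w _ T hdTCt]
  rw [hsum, hz, hIeq, cutW_comm G w Ct T]
  ring

end helpers

/-- If `C` is a vertex cover, `I = V∖C`, `C̃ ⊆ C` and `|C̃| ≤ s ≤ |C̃| + |I|`, then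
`min{ w(S, V∖S) : S ∩ C = C̃, |S| = s }
  = w(C̃, C∖C̃) + w(C̃, I) + min{ Σ_{i∈T}(w({i}, C∖C̃) − w({i}, C̃)) : T ⊆ I, |T| = s − |C̃| }`. -/
theorem stmt_4 {V : Type*} [Fintype V] [DecidableEq V] (G : SimpleGraph V) [DecidableRel G.Adj]
    (w : Sym2 V → ℝ) (hw : ∀ e ∈ G.edgeSet, 0 < w e)
    (C : Finset V) (hC : ∀ u v, G.Adj u v → u ∈ C ∨ v ∈ C)
    (I : Finset V) (hI : I = Cᶜ)
    (Ct : Finset V) (hCt : Ct ⊆ C)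
    (s : ℕ) (hs1 : Ct.card ≤ s) (hs2 : s ≤ Ct.card + I.card) :
    sInf {x : ℝ | ∃ S : Finset V, S ∩ C = Ct ∧ S.card = s ∧ x = cutW G w S Sᶜ} =
      cutW G w Ct (C \ Ct) + cutW G w Ct I +
        sInf {x : ℝ | ∃ T : Finset V, T ⊆ I ∧ T.card = s - Ct.card ∧
          x = ∑ i ∈ T, (cutW G w {i} (C \ Ct) - cutW G w {i} Ct)} := by
  subst hI
  set c := cutW G w Ct (C \ Ct) + cutW G w Ct Cᶜ with hc
  set B := {x : ℝ | ∃ T : Finset V, T ⊆ Cᶜ ∧ T.card = s - Ct.card ∧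
      x = ∑ i ∈ T, (cutW G w {i} (C \ Ct) - cutW G w {i} Ct)} with hB
  have hA : {x : ℝ | ∃ S : Finset V, S ∩ C = Ct ∧ S.card = s ∧ x = cutW G w S Sᶜ} =
      (fun y => c + y) '' B := by
    ext x
    simp only [Set.mem_setOf_eq, Set.mem_image, hB]
    constructor
    · rintro ⟨S, hSC, hScard, rfl⟩
      have hdisj : Disjoint (S \ C) C :=
        Finset.disjoint_left.2 fun y hy => (Finset.mem_sdiff.1 hy).2
      refine ⟨∑ i ∈ S \ C, (cutW G w {i} (C \ Ct) - cutW G w {i} Ct),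
        ⟨S \ C, fun x hx => Finset.mem_compl.2 (Finset.mem_sdiff.1 hx).2, ?_, rfl⟩, ?_⟩
      · have hca : S.card = Ct.card + (S \ C).card := by
          rw [← hSC, ← Finset.card_union_of_disjoint]
          · congr 1
            ext y
            simp only [Finset.mem_union, Finset.mem_inter, Finset.mem_sdiff]
            tauto
          · exact Finset.disjoint_left.2 fun y hy hy' =>
              (Finset.mem_sdiff.1 hy').2 (Finset.mem_inter.1 hy).2
        omega
      · have hS : S = Ct ∪ (S \ C) := by
          rw [← hSC]
          ext y
          simp only [Finset.mem_union, Finset.mem_inter, Finset.mem_sdiff]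
          tauto
        rw [hc]
        conv_rhs => rw [hS]
        exact (cutW_key G w C hC Ct (S \ C) hCt hdisj).symm
    · rintro ⟨y, ⟨T, hTI, hTcard, rfl⟩, rfl⟩
      have hdTC : Disjoint T C := Finset.disjoint_left.2 fun y hy => Finset.mem_compl.1 (hTI hy)
      refine ⟨Ct ∪ T, ?_, ?_, ?_⟩
      · rw [Finset.union_inter_distrib_right, Finset.inter_eq_left.2 hCt,
          (Finset.disjoint_iff_inter_eq_empty.1 hdTC), Finset.union_empty]
      · rw [Finset.card_union_of_disjoint (hdTC.mono_right hCt).symm, hTcard]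
        omega
      · rw [hc]
        exact (cutW_key G w C hC Ct T hCt hdTC).symm
  rw [hA]
  have hBne : B.Nonempty := by
    have hile : s - Ct.card ≤ (Cᶜ : Finset V).card := by omega
    obtain ⟨T, hT1, hT2⟩ := Finset.exists_subset_card_eq hile
    exact ⟨_, T, hT1, hT2, rfl⟩
  have hBbdd : BddBelow B := by
    have hsub : B ⊆ (fun T : Finset V => ∑ i ∈ T, (cutW G w {i} (C \ Ct) - cutW G w {i} Ct)) ''
        Set.univ := by
      rintro x ⟨T, _, _, rfl⟩
      exact ⟨T, Set.mem_univ _, rfl⟩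
    exact ((Set.finite_univ.image _).subset hsub).bddBelow
  have hmap := (OrderIso.addLeft c).map_csInf' hBne hBbdd
  simp only [OrderIso.addLeft_apply] at hmap
  rw [← hmap]
end

section
/- Let w_1, …, w_n be positive integers with Σ_{i=1}^n w_i = 2B, and set w_{n+1} = B. Then the following are equivalent: (i) there exists a subset I ⊆ {1, …, n} with Σ_{i∈I} w_i = B; (ii) there exists a partition of {1, …, n+1} into three sets I_1, I_2, I_3 with Σ_{i∈I_j} w_i ≤ B for each j ∈ {1,2,3}. Moreover, in case (ii) necessarily Σ_{i∈I_j} w_i = B for every j. -/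
open Finset

lemma sum_castSucc_image (n : ℕ) (w : Fin (n + 1) → ℕ) (I : Finset (Fin n)) :
    ∑ i ∈ I.image Fin.castSucc, w i = ∑ i ∈ I, w i.castSucc :=
  Finset.sum_image (by intro a _ b _ h; exact Fin.castSucc_injective n h)

lemma extract_of_not_last (n B : ℕ) (w : Fin (n + 1) → ℕ) (S : Finset (Fin (n + 1)))
    (hS : Fin.last n ∉ S) (hsum : ∑ i ∈ S, w i = B) :
    ∃ I : Finset (Fin n), ∑ i ∈ I, w i.castSucc = B := by
  refine ⟨Finset.univ.filter (fun i : Fin n => i.castSucc ∈ S), ?_⟩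
  rw [← sum_castSucc_image, ← hsum]
  congr 1
  ext j
  simp only [Finset.mem_image, Finset.mem_filter, Finset.mem_univ, true_and]
  constructor
  · rintro ⟨i, hi, rfl⟩; exact hi
  · intro hj
    have hjne : j ≠ Fin.last n := by rintro rfl; exact hS hj
    obtain ⟨i, rfl⟩ := Fin.exists_castSucc_eq.mpr hjne
    exact ⟨i, hj, rfl⟩

/-- Let `w_1, …, w_n` be positive integers summing to `2B` and set `w_{n+1} = B`. Then
there is `I ⊆ {1, …, n}` with `Σ_{i∈I} w_i = B` iff `{1, …, n+1}` can be partitioned into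
three sets each of weight at most `B`; moreover in any such partition each weight equals `B`. -/
theorem stmt_17 (n B : ℕ) (w : Fin (n + 1) → ℕ) (hpos : ∀ i, 0 < w i) (hB : 0 < B)
    (hsum : ∑ i : Fin n, w i.castSucc = 2 * B) (hlast : w (Fin.last n) = B) :
    ((∃ I : Finset (Fin n), ∑ i ∈ I, w i.castSucc = B) ↔
      (∃ I₁ I₂ I₃ : Finset (Fin (n + 1)),
        Disjoint I₁ I₂ ∧ Disjoint I₁ I₃ ∧ Disjoint I₂ I₃ ∧
        I₁ ∪ I₂ ∪ I₃ = Finset.univ ∧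
        (∑ i ∈ I₁, w i) ≤ B ∧ (∑ i ∈ I₂, w i) ≤ B ∧ (∑ i ∈ I₃, w i) ≤ B)) ∧
    (∀ I₁ I₂ I₃ : Finset (Fin (n + 1)),
      Disjoint I₁ I₂ → Disjoint I₁ I₃ → Disjoint I₂ I₃ →
      I₁ ∪ I₂ ∪ I₃ = Finset.univ →
      (∑ i ∈ I₁, w i) ≤ B → (∑ i ∈ I₂, w i) ≤ B → (∑ i ∈ I₃, w i) ≤ B →
      ((∑ i ∈ I₁, w i) = B ∧ (∑ i ∈ I₂, w i) = B ∧ (∑ i ∈ I₃, w i) = B)) := by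
  have htot : ∑ i : Fin (n + 1), w i = 3 * B := by
    rw [Fin.sum_univ_castSucc, hsum, hlast]; ring
  have key : ∀ I₁ I₂ I₃ : Finset (Fin (n + 1)),
      Disjoint I₁ I₂ → Disjoint I₁ I₃ → Disjoint I₂ I₃ →
      I₁ ∪ I₂ ∪ I₃ = Finset.univ →
      (∑ i ∈ I₁, w i) ≤ B → (∑ i ∈ I₂, w i) ≤ B → (∑ i ∈ I₃, w i) ≤ B →
      ((∑ i ∈ I₁, w i) = B ∧ (∑ i ∈ I₂, w i) = B ∧ (∑ i ∈ I₃, w i) = B) := by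
    intro I₁ I₂ I₃ h12 h13 h23 hu h1 h2 h3
    have hsum3 : ∑ i ∈ I₁, w i + ∑ i ∈ I₂, w i + ∑ i ∈ I₃, w i = 3 * B := by
      rw [← Finset.sum_union h12, ← Finset.sum_union (Finset.disjoint_union_left.mpr ⟨h13, h23⟩),
        hu, htot]
    omega
  refine ⟨⟨?_, ?_⟩, key⟩
  · rintro ⟨I, hI⟩
    refine ⟨I.image Fin.castSucc, Iᶜ.image Fin.castSucc, {Fin.last n}, ?_, ?_, ?_, ?_, ?_, ?_, ?_⟩
    · rw [Finset.disjoint_image (Fin.castSucc_injective n)]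
      exact disjoint_compl_right
    · simp only [Finset.disjoint_singleton_right, Finset.mem_image]
      rintro ⟨i, _, h⟩; exact absurd h (Fin.ne_of_lt (Fin.castSucc_lt_last i))
    · simp only [Finset.disjoint_singleton_right, Finset.mem_image]
      rintro ⟨i, _, h⟩; exact absurd h (Fin.ne_of_lt (Fin.castSucc_lt_last i))
    · ext j
      simp only [Finset.mem_union, Finset.mem_image, Finset.mem_singleton, Finset.mem_univ,
        iff_true]
      rcases eq_or_ne j (Fin.last n) with rfl | hj
      · right; rfl
      · obtain ⟨i, rfl⟩ := Fin.exists_castSucc_eq.mpr hj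
        by_cases hi : i ∈ I
        · exact Or.inl (Or.inl ⟨i, hi, rfl⟩)
        · exact Or.inl (Or.inr ⟨i, Finset.mem_compl.mpr hi, rfl⟩)
    · rw [sum_castSucc_image, hI]
    · rw [sum_castSucc_image]
      have := Finset.sum_add_sum_compl I (fun i : Fin n => w i.castSucc)
      omega
    · simp [hlast]
  · rintro ⟨I₁, I₂, I₃, h12, h13, h23, hu, h1, h2, h3⟩
    obtain ⟨e1, e2, e3⟩ := key I₁ I₂ I₃ h12 h13 h23 hu h1 h2 h3
    by_cases hl : Fin.last n ∈ I₁
    · exact extract_of_not_last n B w I₂ (fun h => Finset.disjoint_left.mp h12 hl h) e2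
    · exact extract_of_not_last n B w I₁ hl e1
end
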